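/- Any Manhattan network on a set T of terminals with two points t_i, t_j forming a vertical strip must contain both vertical sides of the strip rectangle R(t_i,t_j); consequently, in the directed (bidirected) setting, the entire boundary of R(t_i,t_j) belongs to every bidirected Manhattan network on T, oriented either fully clockwise or fully counterclockwise. -/
import Mathlib


open MeasureTheory

noncomputable section

/-- l1 (Manhattan) distance in the plane. -/
def d1 (p q : ℝ × ℝ) : ℝ := |p.1 - q.1| + |p.2 - q.2|

/-- Smallest axis-parallel rectangle containing `a` and `b`. -/
def Rect (a b : ℝ × ℝ) : Set (ℝ × ℝ) :=
  {m | min a.1 b.1 ≤ m.1 ∧ m.1 ≤ max a.1 b.1 ∧ min a.2 b.2 ≤ m.2 ∧ m.2 ≤ max a.2 b.2}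

/-- Length of a polygonal path given by its list of vertices. -/
def pathLen : List (ℝ × ℝ) → ℝ
  | [] => 0
  | [_] => 0
  | p :: q :: rest => d1 p q + pathLen (q :: rest)

/-- `P` is a path starting at `a` and ending at `b`. -/
def IsPathFrom (P : List (ℝ × ℝ)) (a b : ℝ × ℝ) : Prop :=
  P.head? = some a ∧ P.getLast? = some b

/-- The set of points of the polygonal path `P`. -/
def polyline (P : List (ℝ × ℝ)) : Set (ℝ × ℝ) :=
  ⋃ pr ∈ P.zip P.tail, segment ℝ pr.1 pr.2

/-- There is a directed Manhattan path from `a` to `b` using the directed edges of `N`. -/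
def DirManPath (N : Set ((ℝ × ℝ) × (ℝ × ℝ))) (a b : ℝ × ℝ) : Prop :=
  ∃ P : List (ℝ × ℝ), IsPathFrom P a b ∧ P.Chain' (fun u v => (u, v) ∈ N) ∧
    pathLen P = d1 a b

/-- `p` is a grid point of `Γ(T)`. -/
def Gpt (T : Set (ℝ × ℝ)) (p : ℝ × ℝ) : Prop :=
  (∃ t ∈ T, t.1 = p.1) ∧ (∃ t ∈ T, t.2 = p.2)

/-- `(u,v)` is a (minimal) grid edge of `Γ(T)`. -/
def GridEdge (T : Set (ℝ × ℝ)) (u v : ℝ × ℝ) : Prop :=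
  u ≠ v ∧ (u.1 = v.1 ∨ u.2 = v.2) ∧ Gpt T u ∧ Gpt T v ∧
    ∀ w, Gpt T w → w ∈ Rect u v → w = u ∨ w = v

-- ========== helper lemmas (proved in h1) ==========
lemma d1_comm (p q : ℝ × ℝ) : d1 p q = d1 q p := by
  simp [d1, abs_sub_comm]

lemma d1_self (p : ℝ × ℝ) : d1 p p = 0 := by simp [d1]

lemma d1_nonneg (p q : ℝ × ℝ) : 0 ≤ d1 p q := by
  have := abs_nonneg (p.1 - q.1); have := abs_nonneg (p.2 - q.2); simp [d1]; linarith

lemma d1_pos {p q : ℝ × ℝ} (h : p ≠ q) : 0 < d1 p q := by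
  rcases lt_or_eq_of_le (d1_nonneg p q) with h'|h'
  · exact h'
  · exfalso; apply h
    have h1 := abs_nonneg (p.1 - q.1); have h2 := abs_nonneg (p.2 - q.2)
    have e : |p.1 - q.1| = 0 ∧ |p.2 - q.2| = 0 := by
      constructor <;> (simp [d1] at h'; linarith)
    exact Prod.ext_iff.mpr ⟨by have := abs_eq_zero.mp e.1; linarith,
      by have := abs_eq_zero.mp e.2; linarith⟩

lemma d1_triangle (p q r : ℝ × ℝ) : d1 p r ≤ d1 p q + d1 q r := by
  have h1 := abs_sub_le p.1 q.1 r.1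
  have h2 := abs_sub_le p.2 q.2 r.2
  simp [d1]; linarith

lemma pathLen_cons_cons (p q : ℝ × ℝ) (l : List (ℝ × ℝ)) :
    pathLen (p :: q :: l) = d1 p q + pathLen (q :: l) := rfl

lemma pathLen_ge : ∀ (l : List (ℝ × ℝ)) (a b : ℝ × ℝ),
    l.head? = some a → l.getLast? = some b → d1 a b ≤ pathLen l
  | [], a, b => by simp
  | [p], a, b => by
      intro h1 h2
      simp at h1 h2
      subst h1; subst h2; simp [pathLen, d1_self]
  | p :: q :: l, a, b => by
      intro h1 h2
      simp at h1
      rw [List.getLast?_cons_cons] at h2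
      have ih := pathLen_ge (q :: l) q b rfl h2
      have ht := d1_triangle a q b
      subst h1
      rw [pathLen_cons_cons]; linarith

lemma pathLen_nonneg : ∀ l : List (ℝ × ℝ), 0 ≤ pathLen l
  | [] => le_refl _
  | [_] => le_refl _
  | p :: q :: l => by
      rw [pathLen_cons_cons]
      have := d1_nonneg p q; have := pathLen_nonneg (q :: l); linarith

lemma pathLen_concat : ∀ (l : List (ℝ × ℝ)) (x : ℝ × ℝ),
    pathLen (l ++ [x]) = pathLen l + (l.getLast?.elim 0 fun y => d1 y x)
  | [], x => by simp [pathLen]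
  | [p], x => by simp [pathLen, pathLen_cons_cons]
  | p :: q :: l, x => by
      have ih := pathLen_concat (q :: l) x
      simp only [List.cons_append, pathLen_cons_cons] at *
      rw [ih, List.getLast?_cons_cons]
      ring

lemma pathLen_reverse : ∀ l : List (ℝ × ℝ), pathLen l.reverse = pathLen l
  | [] => rfl
  | [_] => rfl
  | p :: q :: l => by
      have ih := pathLen_reverse (q :: l)
      rw [List.reverse_cons, pathLen_concat, ih, List.getLast?_reverse]
      simp [pathLen_cons_cons, d1_comm]
      ring

lemma between_of_eq {x c y : ℝ} (h : |x - c| + |c - y| = |x - y|) :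
    min x y ≤ c ∧ c ≤ max x y := by
  rcases abs_cases (x - c) with ⟨e1, f1⟩|⟨e1, f1⟩ <;>
  rcases abs_cases (c - y) with ⟨e2, f2⟩|⟨e2, f2⟩ <;>
  rcases abs_cases (x - y) with ⟨e3, f3⟩|⟨e3, f3⟩ <;>
  constructor <;> simp [min_def, max_def] <;> split_ifs <;> linarith

lemma eq_of_between {x c y : ℝ} (h1 : min x y ≤ c) (h2 : c ≤ max x y) :
    |x - c| + |c - y| = |x - y| := by
  simp only [min_def, max_def] at h1 h2
  split_ifs at h1 h2 <;>
  rcases abs_cases (x - c) with ⟨e1, f1⟩|⟨e1, f1⟩ <;>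
  rcases abs_cases (c - y) with ⟨e2, f2⟩|⟨e2, f2⟩ <;>
  rcases abs_cases (x - y) with ⟨e3, f3⟩|⟨e3, f3⟩ <;>
  linarith

lemma between_trans {a c y b : ℝ} (h1 : min a b ≤ c) (h2 : c ≤ max a b)
    (h3 : min c b ≤ y) (h4 : y ≤ max c b) : min a y ≤ c ∧ c ≤ max a y := by
  simp only [min_def, max_def] at * <;> split_ifs at * <;> constructor <;> linarith

-- ========== DirManPath helpers ==========

lemma dirman_refl (N : Set ((ℝ × ℝ) × (ℝ × ℝ))) (u : ℝ × ℝ) : DirManPath N u u :=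
  ⟨[u], ⟨rfl, rfl⟩, List.isChain_singleton u, by simp [pathLen, d1_self]⟩

lemma dirman_edge {N : Set ((ℝ × ℝ) × (ℝ × ℝ))} {u v : ℝ × ℝ} (h : (u, v) ∈ N) :
    DirManPath N u v :=
  ⟨[u, v], ⟨rfl, rfl⟩, List.isChain_cons_cons.mpr ⟨h, List.isChain_singleton v⟩,
    by rw [pathLen_cons_cons]; simp [pathLen]⟩

lemma dirman_rev {N : Set ((ℝ × ℝ) × (ℝ × ℝ))} {u v : ℝ × ℝ}
    (h : DirManPath {e | (e.2, e.1) ∈ N} u v) : DirManPath N v u := by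
  obtain ⟨P, ⟨h1, h2⟩, hc, hlen⟩ := h
  refine ⟨P.reverse, ⟨?_, ?_⟩, ?_, ?_⟩
  · rw [List.head?_reverse]; exact h2
  · rw [List.getLast?_reverse]; exact h1
  · exact List.isChain_reverse.mpr hc
  · rw [pathLen_reverse, hlen, d1_comm]

-- ========== GridEdge symmetry ==========

lemma rect_comm (a b : ℝ × ℝ) : Rect a b = Rect b a := by
  unfold Rect
  ext m
  rw [min_comm, max_comm, min_comm a.2, max_comm a.2]

lemma gridEdge_symm {T : Set (ℝ × ℝ)} {u v : ℝ × ℝ} (h : GridEdge T u v) :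
    GridEdge T v u := by
  obtain ⟨h1, h2, h3, h4, h5⟩ := h
  exact ⟨h1.symm, h2.imp Eq.symm Eq.symm, h4, h3,
    fun w hw hm => (h5 w hw (by rwa [rect_comm])).symm⟩

-- ========== column lemma ==========

/-- A geodesic between two points in the same column enters its endpoint by a
vertical edge. -/
lemma col_lemma (T : Set (ℝ × ℝ)) (N : Set ((ℝ × ℝ) × (ℝ × ℝ)))
    (hgrid : ∀ e ∈ N, GridEdge T e.1 e.2) (v : ℝ × ℝ) :
    ∀ (P : List (ℝ × ℝ)) (u : ℝ × ℝ), u.1 = v.1 → u ≠ v →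
    P.head? = some u → P.getLast? = some v →
    P.Chain' (fun x y => (x, y) ∈ N) → pathLen P = d1 u v →
    ∃ h : ℝ, ((v.1, h), v) ∈ N ∧ h ≠ v.2 ∧ min u.2 v.2 ≤ h ∧ h ≤ max u.2 v.2 := by
  intro P
  induction P with
  | nil => intro u _ _ hh; simp at hh
  | cons p l ih =>
    intro u hcol hne hh hl hc hlen
    have hp : p = u := by simpa using hh
    subst hp
    cases l with
    | nil =>
      exfalso; apply hne; simpa using hl
    | cons c l' =>
      have hedge : (p, c) ∈ N := (List.isChain_cons_cons.mp hc).1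
      have hc' : List.Chain' (fun x y => (x, y) ∈ N) (c :: l') :=
        (List.isChain_cons_cons.mp hc).2
      rw [List.getLast?_cons_cons] at hl
      have hge : d1 c v ≤ pathLen (c :: l') := pathLen_ge _ c v rfl hl
      have htri : d1 p v ≤ d1 p c + d1 c v := d1_triangle p c v
      rw [pathLen_cons_cons] at hlen
      have heq1 : d1 p c + d1 c v = d1 p v := by linarith
      have hlen2 : pathLen (c :: l') = d1 c v := by linarith
      -- coordinatewise equality
      have ex : |p.1 - c.1| + |c.1 - v.1| = |p.1 - v.1| := by
        have t1 := abs_sub_le p.1 c.1 v.1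
        have t2 := abs_sub_le p.2 c.2 v.2
        simp only [d1] at heq1; linarith
      have ey : |p.2 - c.2| + |c.2 - v.2| = |p.2 - v.2| := by
        have t1 := abs_sub_le p.1 c.1 v.1
        have t2 := abs_sub_le p.2 c.2 v.2
        simp only [d1] at heq1; linarith
      -- c is in the same column
      have hcx : c.1 = v.1 := by
        have hb := between_of_eq ex
        rw [hcol] at hb
        simp at hb
        have h1 := hb.1; have h2 := hb.2
        linarith
      have hby := between_of_eq ey
      by_cases hcv : c = v
      · -- c = v : the rest of the path must be empty
        cases l' with
        | nil =>
          refine ⟨p.2, ?_, ?_, min_le_left _ _, le_max_left _ _⟩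
          · have hpe : p = (v.1, p.2) := Prod.ext_iff.mpr ⟨hcol, rfl⟩
            rw [← hpe, ← hcv]; exact hedge
          · intro h
            exact hne (Prod.ext_iff.mpr ⟨hcol, h⟩)
        | cons e l'' =>
          exfalso
          have hedge2 : (c, e) ∈ N := (List.isChain_cons_cons.mp hc').1
          have hnece : c ≠ e := (hgrid _ hedge2).1
          have hpos : 0 < d1 c e := d1_pos hnece
          have hge2 : d1 e v ≤ pathLen (e :: l'') :=
            pathLen_ge _ e v rfl (by rw [← List.getLast?_cons_cons (a := c)]; exact hl)
          rw [pathLen_cons_cons] at hlen2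
          rw [hcv, d1_self] at hlen2
          rw [hcv] at hpos
          have := d1_nonneg e v
          linarith
      · -- recurse
        obtain ⟨h, hmem, hne2, hb1, hb2⟩ := ih c hcx hcv rfl hl hc' hlen2
        refine ⟨h, hmem, hne2, ?_, ?_⟩
        · exact le_trans (le_min hby.1 (min_le_right _ _)) hb1
        · exact le_trans hb2 (max_le hby.2 (le_max_right _ _))

-- ========== crossing lemma ==========

/-- Structure of a geodesic crossing an empty vertical strip from left to right. -/
lemma cross_lemma (T : Set (ℝ × ℝ)) (N : Set ((ℝ × ℝ) × (ℝ × ℝ)))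
    (hgrid : ∀ e ∈ N, GridEdge T e.1 e.2) (b : ℝ × ℝ) :
    ∀ (P : List (ℝ × ℝ)) (a : ℝ × ℝ), a.1 < b.1 →
    (∀ w : ℝ × ℝ, Gpt T w → a.1 ≤ w.1 → w.1 ≤ b.1 → w.1 = a.1 ∨ w.1 = b.1) →
    P.head? = some a → P.getLast? = some b →
    P.Chain' (fun x y => (x, y) ∈ N) → pathLen P = d1 a b →
    ∃ y1 : ℝ, min a.2 b.2 ≤ y1 ∧ y1 ≤ max a.2 b.2 ∧
      ((a.1, y1), (b.1, y1)) ∈ N ∧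
      DirManPath N a (a.1, y1) ∧ DirManPath N (b.1, y1) b ∧
      (y1 ≠ a.2 → ∃ h : ℝ, (a, (a.1, h)) ∈ N ∧ h ≠ a.2 ∧
        min a.2 b.2 ≤ h ∧ h ≤ max a.2 b.2) ∧
      (y1 ≠ b.2 → ∃ h : ℝ, ((b.1, h), b) ∈ N ∧ h ≠ b.2 ∧
        min a.2 b.2 ≤ h ∧ h ≤ max a.2 b.2) := by
  intro P
  induction P with
  | nil => intro a _ _ hh; simp at hh
  | cons p l ih =>
    intro a hab hstrip hh hl hc hlen
    have hp : p = a := by simpa using hh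
    subst hp
    cases l with
    | nil =>
      exfalso
      have : p = b := by simpa using hl
      rw [this] at hab; exact lt_irrefl _ hab
    | cons c l' =>
      have hedge : (p, c) ∈ N := (List.isChain_cons_cons.mp hc).1
      have hc' : List.Chain' (fun x y => (x, y) ∈ N) (c :: l') :=
        (List.isChain_cons_cons.mp hc).2
      have hg := hgrid _ hedge
      rw [List.getLast?_cons_cons] at hl
      have hge : d1 c b ≤ pathLen (c :: l') := pathLen_ge _ c b rfl hl
      have htri : d1 p b ≤ d1 p c + d1 c b := d1_triangle p c b
      rw [pathLen_cons_cons] at hlen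
      have heq1 : d1 p c + d1 c b = d1 p b := by linarith
      have hlen2 : pathLen (c :: l') = d1 c b := by linarith
      have ex : |p.1 - c.1| + |c.1 - b.1| = |p.1 - b.1| := by
        have t1 := abs_sub_le p.1 c.1 b.1
        have t2 := abs_sub_le p.2 c.2 b.2
        simp only [d1] at heq1; linarith
      have ey : |p.2 - c.2| + |c.2 - b.2| = |p.2 - b.2| := by
        have t1 := abs_sub_le p.1 c.1 b.1
        have t2 := abs_sub_le p.2 c.2 b.2
        simp only [d1] at heq1; linarith
      have hbx := between_of_eq ex
      have hby := between_of_eq ey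
      rw [min_eq_left hab.le, max_eq_right hab.le] at hbx
      -- c's x-coordinate is a grid coordinate in [p.1, b.1]
      have hcx : c.1 = p.1 ∨ c.1 = b.1 := hstrip c hg.2.2.2.1 hbx.1 hbx.2
      rcases hcx with hcx | hcx
      · -- first step is vertical; recurse
        have hcb : c ≠ b := by
          intro h; rw [h] at hcx; rw [hcx] at hab; exact lt_irrefl _ hab
        have hstrip' : ∀ w : ℝ × ℝ, Gpt T w → c.1 ≤ w.1 → w.1 ≤ b.1 →
            w.1 = c.1 ∨ w.1 = b.1 := by
          intro w hw h1 h2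
          rw [hcx] at h1 ⊢
          exact hstrip w hw h1 h2
        obtain ⟨y1, hy1, hy2, hcr, hda, hdb, hvs, hve⟩ :=
          ih c (by rw [hcx]; exact hab) hstrip' rfl hl hc' hlen2
        have hbtw : min p.2 y1 ≤ c.2 ∧ c.2 ≤ max p.2 y1 :=
          between_trans hby.1 hby.2 hy1 hy2
        have hpc2 : p.2 ≠ c.2 := by
          intro h
          exact hg.1 (Prod.ext_iff.mpr ⟨hcx.symm, h⟩)
        refine ⟨y1, ?_, ?_, ?_, ?_, hdb, ?_, ?_⟩
        · exact le_trans (le_min hby.1 (min_le_right _ _)) hy1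
        · exact le_trans hy2 (max_le hby.2 (le_max_right _ _))
        · rwa [hcx] at hcr
        · -- prepend p to the path from c
          obtain ⟨L, ⟨Lh, Ll⟩, Lc, Llen⟩ := hda
          cases L with
          | nil => simp at Lh
          | cons q Lt =>
            have hq : q = c := by simpa using Lh
            subst hq
            refine ⟨p :: q :: Lt, ⟨rfl, ?_⟩, List.isChain_cons_cons.mpr ⟨hedge, Lc⟩, ?_⟩
            · rw [List.getLast?_cons_cons]
              rw [Ll, hcx]
            · rw [pathLen_cons_cons, Llen]
              have e1 : d1 q (q.1, y1) = |q.2 - y1| := by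
                simp [d1]
              have e2 : d1 p q = |p.2 - q.2| := by
                simp [d1, hcx]
              have e3 : d1 p (p.1, y1) = |p.2 - y1| := by
                simp [d1]
              rw [e1, e2, e3]
              exact eq_of_between hbtw.1 hbtw.2
        · -- first step out of p is vertical
          intro _
          refine ⟨c.2, ?_, fun h => hpc2 h.symm, hby.1, hby.2⟩
          have : (p.1, c.2) = c := Prod.ext_iff.mpr ⟨hcx.symm, rfl⟩
          rwa [this]
        · -- last step into b, widened
          intro hne
          obtain ⟨h, hmem, hne2, hb1, hb2⟩ := hve hne
          refine ⟨h, hmem, hne2, ?_, ?_⟩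
          · exact le_trans (le_min hby.1 (min_le_right _ _)) hb1
          · exact le_trans hb2 (max_le hby.2 (le_max_right _ _))
      · -- first step is the crossing edge
        have hpc2 : p.2 = c.2 := by
          rcases hg.2.1 with h | h
          · exfalso; rw [h, hcx] at hab; exact lt_irrefl _ hab
          · exact h
        have hcform : c = (b.1, p.2) := Prod.ext_iff.mpr ⟨hcx, hpc2.symm⟩
        refine ⟨p.2, min_le_left _ _, le_max_left _ _, ?_, dirman_refl N p, ?_, ?_, ?_⟩
        · have hpform : p = (p.1, p.2) := rfl
          rw [← hpform, ← hcform]; exact hedge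
        · exact ⟨c :: l', ⟨by rw [hcform]; rfl, hl⟩, hc', by rw [hlen2, hcform]⟩
        · exact fun h => absurd rfl h
        · intro hne
          have hcb : c ≠ b := by
            intro h; rw [← h, hcform] at hne; exact hne rfl
          obtain ⟨h, hmem, hne2, hb1, hb2⟩ :=
            col_lemma T N hgrid b (c :: l') c hcx hcb rfl hl hc' hlen2
          refine ⟨h, hmem, hne2, ?_, ?_⟩
          · rw [hcform] at hb1; simpa using hb1
          · rw [hcform] at hb2; simpa using hb2

-- ========== corner lemma ==========

/-- At a point `p`, the network cannot contain an outgoing and an incoming vertical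
edge on the same side of `p`. -/
lemma corner_lemma (T : Set (ℝ × ℝ)) (N : Set ((ℝ × ℝ) × (ℝ × ℝ)))
    (hgrid : ∀ e ∈ N, GridEdge T e.1 e.2)
    (hsingle : ∀ u v : ℝ × ℝ, (u, v) ∈ N → (v, u) ∉ N)
    (p c c' : ℝ × ℝ) (h1 : (p, c) ∈ N) (h2 : (c', p) ∈ N)
    (e1 : c.1 = p.1) (e2 : c'.1 = p.1)
    (hside : (p.2 < c.2 ∧ p.2 < c'.2) ∨ (c.2 < p.2 ∧ c'.2 < p.2)) : False := by
  have g1 := hgrid _ h1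
  have g2 := hgrid _ h2
  simp only at g1 g2
  have hcc : c = c' := by
    rcases hside with ⟨hs1, hs2⟩ | ⟨hs1, hs2⟩
    · rcases le_total c.2 c'.2 with hle | hle
      · have hmem : c ∈ Rect c' p :=
          ⟨by rw [e1, e2]; simp, by rw [e1, e2]; simp,
           min_le_iff.mpr (Or.inr hs1.le), le_max_iff.mpr (Or.inl hle)⟩
        rcases g2.2.2.2.2 c g1.2.2.2.1 hmem with h | h
        · exact h
        · exact absurd (h ▸ hs1) (lt_irrefl _)
      · have hmem : c' ∈ Rect p c :=
          ⟨by rw [e1, e2]; simp, by rw [e1, e2]; simp,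
           min_le_iff.mpr (Or.inl hs2.le), le_max_iff.mpr (Or.inr hle)⟩
        rcases g1.2.2.2.2 c' g2.2.2.1 hmem with h | h
        · exact absurd (h ▸ hs2) (lt_irrefl _)
        · exact h.symm
    · rcases le_total c'.2 c.2 with hle | hle
      · have hmem : c ∈ Rect c' p :=
          ⟨by rw [e1, e2]; simp, by rw [e1, e2]; simp,
           min_le_iff.mpr (Or.inl hle), le_max_iff.mpr (Or.inr hs1.le)⟩
        rcases g2.2.2.2.2 c g1.2.2.2.1 hmem with h | h
        · exact h
        · exact absurd (h ▸ hs1) (lt_irrefl _)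
      · have hmem : c' ∈ Rect p c :=
          ⟨by rw [e1, e2]; simp, by rw [e1, e2]; simp,
           min_le_iff.mpr (Or.inr hle), le_max_iff.mpr (Or.inl hs2.le)⟩
        rcases g1.2.2.2.2 c' g2.2.2.1 hmem with h | h
        · exact absurd (h ▸ hs2) (lt_irrefl _)
        · exact h.symm
  rw [hcc] at h1
  exact hsingle _ _ h1 h2

/-- Every bidirected Manhattan network on `T` contains the whole boundary of a vertical
strip `R(ti,tj)`, oriented clockwise or counterclockwise. -/
theorem stmt5 (T : Set (ℝ × ℝ))
    (hx : ∀ a ∈ T, ∀ b ∈ T, a.1 = b.1 → a = b)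
    (hy : ∀ a ∈ T, ∀ b ∈ T, a.2 = b.2 → a = b)
    (N : Set ((ℝ × ℝ) × (ℝ × ℝ)))
    (hgrid : ∀ e ∈ N, GridEdge T e.1 e.2)
    (hsingle : ∀ u v : ℝ × ℝ, (u, v) ∈ N → (v, u) ∉ N)
    (hman : ∀ a ∈ T, ∀ b ∈ T, DirManPath N a b)
    (ti tj : ℝ × ℝ) (hi : ti ∈ T) (hj : tj ∈ T) (hij : ti.1 < tj.1)
    (hcons : ∀ t ∈ T, ¬(ti.1 < t.1 ∧ t.1 < tj.1))
    (hempty : Rect ti tj ∩ T = {ti, tj})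
    (p00 p01 p10 p11 : ℝ × ℝ)
    (h00 : p00 = (ti.1, min ti.2 tj.2)) (h01 : p01 = (ti.1, max ti.2 tj.2))
    (h10 : p10 = (tj.1, min ti.2 tj.2)) (h11 : p11 = (tj.1, max ti.2 tj.2)) :
    (DirManPath N p00 p01 ∧ DirManPath N p01 p11 ∧
     DirManPath N p11 p10 ∧ DirManPath N p10 p00) ∨
    (DirManPath N p01 p00 ∧ DirManPath N p00 p10 ∧
     DirManPath N p10 p11 ∧ DirManPath N p11 p01) := by
  have hstrip : ∀ w : ℝ × ℝ, Gpt T w → ti.1 ≤ w.1 → w.1 ≤ tj.1 →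
      w.1 = ti.1 ∨ w.1 = tj.1 := by
    intro w hw h1 h2
    obtain ⟨t, ht, hteq⟩ := hw.1
    rw [← hteq] at h1 h2 ⊢
    rcases eq_or_lt_of_le h1 with h | h
    · exact Or.inl h.symm
    · rcases eq_or_lt_of_le h2 with h' | h'
      · exact Or.inr h'
      · exact absurd ⟨h, h'⟩ (hcons t ht)
  have hij2 : ti.2 ≠ tj.2 := by
    intro h
    rw [hy ti hi tj hj h] at hij
    exact lt_irrefl _ hij
  -- forward geodesic
  obtain ⟨P, ⟨ph, pl⟩, pc, plen⟩ := hman ti hi tj hj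
  obtain ⟨y1, hy1a, hy1b, hC1, hD1a, hD1b, hVS1, hVE1⟩ :=
    cross_lemma T N hgrid tj P ti hij hstrip ph pl pc plen
  -- backward geodesic, reversed
  obtain ⟨Q, ⟨qh, ql⟩, qc, qlen⟩ := hman tj hj ti hi
  have hgrid' : ∀ e ∈ ({e | (e.2, e.1) ∈ N} : Set ((ℝ × ℝ) × (ℝ × ℝ))),
      GridEdge T e.1 e.2 := fun e he => gridEdge_symm (hgrid _ he)
  obtain ⟨y2, hy2a, hy2b, hC2, hD2a, hD2b, hVS2, hVE2⟩ :=
    cross_lemma T {e | (e.2, e.1) ∈ N} hgrid' tj Q.reverse ti hij hstrip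
      (by rw [List.head?_reverse]; exact ql)
      (by rw [List.getLast?_reverse]; exact qh)
      (List.isChain_reverse.mpr qc)
      (by rw [pathLen_reverse, qlen, d1_comm])
  -- convert the reversed data
  have hC2' : ((tj.1, y2), (ti.1, y2)) ∈ N := hC2
  have hD2a' : DirManPath N (ti.1, y2) ti := dirman_rev hD2a
  have hD2b' : DirManPath N tj (tj.1, y2) := dirman_rev hD2b
  -- corner arguments
  have hA : y1 = ti.2 ∨ y2 = ti.2 := by
    by_contra hcon
    push_neg at hcon
    obtain ⟨h1, hm1, hn1, hb1, hb1'⟩ := hVS1 hcon.1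
    obtain ⟨h2, hm2, hn2, hb2, hb2'⟩ := hVS2 hcon.2
    refine corner_lemma T N hgrid hsingle ti (ti.1, h1) (ti.1, h2) hm1 hm2 rfl rfl ?_
    rcases lt_or_gt_of_ne hij2 with hlt | hgt
    · rw [min_eq_left hlt.le] at hb1 hb2
      exact Or.inl ⟨lt_of_le_of_ne hb1 (Ne.symm hn1), lt_of_le_of_ne hb2 (Ne.symm hn2)⟩
    · rw [max_eq_left hgt.le] at hb1' hb2'
      exact Or.inr ⟨lt_of_le_of_ne hb1' hn1, lt_of_le_of_ne hb2' hn2⟩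
  have hB : y1 = tj.2 ∨ y2 = tj.2 := by
    by_contra hcon
    push_neg at hcon
    obtain ⟨h1, hm1, hn1, hb1, hb1'⟩ := hVE1 hcon.1
    obtain ⟨h2, hm2, hn2, hb2, hb2'⟩ := hVE2 hcon.2
    refine corner_lemma T N hgrid hsingle tj (tj.1, h2) (tj.1, h1) hm2 hm1 rfl rfl ?_
    rcases lt_or_gt_of_ne hij2 with hlt | hgt
    · rw [max_eq_right hlt.le] at hb1' hb2'
      exact Or.inr ⟨lt_of_le_of_ne hb2' hn2, lt_of_le_of_ne hb1' hn1⟩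
    · rw [min_eq_right hgt.le] at hb1 hb2
      exact Or.inl ⟨lt_of_le_of_ne hb2 (Ne.symm hn2), lt_of_le_of_ne hb1 (Ne.symm hn1)⟩
  rcases lt_or_gt_of_ne hij2 with hlt | hgt
  · rw [min_eq_left hlt.le] at h00 h10
    rw [max_eq_right hlt.le] at h01 h11
    subst h00; subst h01; subst h10; subst h11
    rcases hA with hA | hA
    · -- y1 = ti.2, hence y2 = tj.2 : counterclockwise
      have hB' : y2 = tj.2 := by
        rcases hB with h | h
        · exact absurd (hA ▸ h) hij2
        · exact h
      rw [hA] at hC1 hD1b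
      rw [hB'] at hC2' hD2a'
      exact Or.inr ⟨hD2a', dirman_edge hC1, hD1b, dirman_edge hC2'⟩
    · -- y2 = ti.2, hence y1 = tj.2 : clockwise
      have hB' : y1 = tj.2 := by
        rcases hB with h | h
        · exact h
        · exact absurd (hA ▸ h) hij2
      rw [hB'] at hC1 hD1a
      rw [hA] at hC2' hD2b'
      exact Or.inl ⟨hD1a, dirman_edge hC1, hD2b', dirman_edge hC2'⟩
  · rw [min_eq_right hgt.le] at h00 h10
    rw [max_eq_left hgt.le] at h01 h11
    subst h00; subst h01; subst h10; subst h11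
    rcases hA with hA | hA
    · -- y1 = ti.2, y2 = tj.2 : clockwise
      have hB' : y2 = tj.2 := by
        rcases hB with h | h
        · exact absurd (hA ▸ h) hij2
        · exact h
      rw [hA] at hC1 hD1b
      rw [hB'] at hC2' hD2a'
      exact Or.inl ⟨hD2a', dirman_edge hC1, hD1b, dirman_edge hC2'⟩
    · -- y2 = ti.2, y1 = tj.2 : counterclockwise
      have hB' : y1 = tj.2 := by
        rcases hB with h | h
        · exact h
        · exact absurd (hA ▸ h) hij2
      rw [hB'] at hC1 hD1a
      rw [hA] at hC2' hD2b'
      exact Or.inr ⟨hD1a, dirman_edge hC1, hD2b', dirman_edge hC2'⟩
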